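/- Let s = (s_n)_{n≥1} be any sequence in (0,1/2)^ℕ. Define Ψ^α on the space C⁰₀ of continuous increasing surjections of [0,1] fixing 0 and 1 piecewise via the four affine pairs (H^α_i, V^α_i). Then the sequence h^n = Ψ^{s_1}∘…∘Ψ^{s_n}(Id) converges uniformly, and its limit h is a homeomorphism of [0,1] onto itself. -/

import Mathlib

open Set Filter

/-- The four-piece operator Ψ^α acting on functions, defined piecewise via the
affine pairs (H^α_i, V^α_i). -/
noncomputable def zipPsi (α : ℝ) (f : ℝ → ℝ) : ℝ → ℝ := fun x =>
  if x ≤ α / 2 then (1 - α) / 2 * f (2 * x / α)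
  else if x ≤ 1 / 2 then (1 - α) / 2 + α / 2 * f ((2 * x - α) / (1 - α))
  else if x ≤ (1 + α) / 2 then 1 / 2 + (1 - α) / 2 * f ((2 * x - 1) / α)
  else 1 - α / 2 + α / 2 * f ((2 * x - (1 + α)) / (1 - α))

/-- h^n = Ψ^{s 0} ∘ … ∘ Ψ^{s (n-1)} applied to the identity. -/
noncomputable def zipHseq (s : ℕ → ℝ) : ℕ → (ℝ → ℝ)
  | 0 => id
  | n + 1 => zipPsi (s 0) (zipHseq (fun i => s (i + 1)) n)

section Psi
variable {α : ℝ} (hα1 : 0 < α) (hα2 : α < 1/2) {f : ℝ → ℝ}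

lemma zipPsi_eq1 (hx2 : x ≤ α/2) :
    zipPsi α f x = (1-α)/2 * f (2*x/α) := by
  unfold zipPsi; rw [if_pos hx2]

include hα1 hα2 in
lemma zipPsi_eq2 (hf0 : f 0 = 0) (hf1 : f 1 = 1) (hx1 : α/2 ≤ x) (hx2 : x ≤ 1/2) :
    zipPsi α f x = (1-α)/2 + α/2 * f ((2*x-α)/(1-α)) := by
  rcases eq_or_lt_of_le hx1 with h | h
  · rw [← h, zipPsi_eq1 le_rfl]
    have e1 : 2*(α/2)/α = 1 := by field_simp
    have e2 : (2*(α/2)-α)/(1-α) = 0 := by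
      have : (1:ℝ) - α ≠ 0 := by linarith
      field_simp; ring
    rw [e1, e2, hf0, hf1]; ring
  · unfold zipPsi; rw [if_neg (not_le.2 h), if_pos hx2]

include hα1 hα2 in
lemma zipPsi_eq3 (hf0 : f 0 = 0) (hf1 : f 1 = 1) (hx1 : 1/2 ≤ x) (hx2 : x ≤ (1+α)/2) :
    zipPsi α f x = 1/2 + (1-α)/2 * f ((2*x-1)/α) := by
  rcases eq_or_lt_of_le hx1 with h | h
  · have h1 : ¬ ((1:ℝ)/2 ≤ α/2) := by push_neg; linarith
    rw [← h, zipPsi_eq2 hα1 hα2 hf0 hf1 (by linarith) le_rfl]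
    have e1 : (2*((1:ℝ)/2)-α)/(1-α) = 1 := by
      have : (1:ℝ) - α ≠ 0 := by linarith
      field_simp
    have e2 : (2*((1:ℝ)/2)-1)/α = 0 := by field_simp; ring
    rw [e1, e2, hf0, hf1]; ring
  · unfold zipPsi
    rw [if_neg (by push_neg; linarith), if_neg (not_le.2 h), if_pos hx2]

include hα1 hα2 in
lemma zipPsi_eq4 (hf0 : f 0 = 0) (hf1 : f 1 = 1) (hx1 : (1+α)/2 ≤ x) :
    zipPsi α f x = 1-α/2 + α/2 * f ((2*x-(1+α))/(1-α)) := by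
  rcases eq_or_lt_of_le hx1 with h | h
  · rw [← h, zipPsi_eq3 hα1 hα2 hf0 hf1 (by linarith) le_rfl]
    have e1 : (2*((1+α)/2)-1)/α = 1 := by field_simp; ring
    have e2 : (2*((1+α)/2)-(1+α))/(1-α) = 0 := by
      have : (1:ℝ) - α ≠ 0 := by linarith
      field_simp; ring
    rw [e1, e2, hf0, hf1]; ring
  · unfold zipPsi
    rw [if_neg (by push_neg; linarith), if_neg (by push_neg; linarith),
        if_neg (not_le.2 h)]

include hα1 hα2 in
lemma zipPsi_arg1 (hx1 : 0 ≤ x) (hx2 : x ≤ α/2) : 2*x/α ∈ Icc (0:ℝ) 1 :=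
  ⟨by positivity, by rw [div_le_one hα1]; linarith⟩

include hα1 hα2 in
lemma zipPsi_arg2 (hx1 : α/2 ≤ x) (hx2 : x ≤ 1/2) : (2*x-α)/(1-α) ∈ Icc (0:ℝ) 1 := by
  have h0 : (0:ℝ) < 1 - α := by linarith
  exact ⟨div_nonneg (by linarith) h0.le, by rw [div_le_one h0]; linarith⟩

include hα1 hα2 in
lemma zipPsi_arg3 (hx1 : 1/2 ≤ x) (hx2 : x ≤ (1+α)/2) : (2*x-1)/α ∈ Icc (0:ℝ) 1 :=
  ⟨div_nonneg (by linarith) hα1.le, by rw [div_le_one hα1]; linarith⟩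

include hα1 hα2 in
lemma zipPsi_arg4 (hx1 : (1+α)/2 ≤ x) (hx2 : x ≤ 1) : (2*x-(1+α))/(1-α) ∈ Icc (0:ℝ) 1 := by
  have h0 : (0:ℝ) < 1 - α := by linarith
  exact ⟨div_nonneg (by linarith) h0.le, by rw [div_le_one h0]; linarith⟩
end Psi

def ZGood (f : ℝ → ℝ) : Prop :=
  MonotoneOn f (Icc 0 1) ∧ f 0 = 0 ∧ f 1 = 1 ∧ ∀ x ∈ Icc (0:ℝ) 1, f x ∈ Icc (0:ℝ) 1

section Psi2
variable {α : ℝ} (hα1 : 0 < α) (hα2 : α < 1/2) {f : ℝ → ℝ}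

include hα1 hα2 in
lemma zipPsi_zero (hf0 : f 0 = 0) : zipPsi α f 0 = 0 := by
  rw [zipPsi_eq1 (by linarith)]
  norm_num [hf0]

include hα1 hα2 in
lemma zipPsi_one (hf0 : f 0 = 0) (hf1 : f 1 = 1) : zipPsi α f 1 = 1 := by
  rw [zipPsi_eq4 hα1 hα2 hf0 hf1 (by linarith)]
  have : (2*(1:ℝ)-(1+α))/(1-α) = 1 := by
    have : (1:ℝ) - α ≠ 0 := by linarith
    field_simp
    ring
  rw [this, hf1]; ring

include hα1 hα2 in
lemma zipPsi_mono (hf : ZGood f) : MonotoneOn (zipPsi α f) (Icc 0 1) := by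
  obtain ⟨hm, hf0, hf1, hmap⟩ := hf
  have hb : ∀ t ∈ Icc (0:ℝ) 1, 0 ≤ f t ∧ f t ≤ 1 := fun t ht => ⟨(hmap t ht).1, (hmap t ht).2⟩
  intro x hx y hy hxy
  rcases le_or_gt y (α/2) with hy1 | hy1
  · rw [zipPsi_eq1 (le_trans hxy hy1), zipPsi_eq1 hy1]
    have ha := zipPsi_arg1 hα1 hα2 hx.1 (le_trans hxy hy1)
    have hb' := zipPsi_arg1 hα1 hα2 hy.1 hy1
    have : 2*x/α ≤ 2*y/α := by gcongr
    nlinarith [hm ha hb' this]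
  rcases lt_or_ge x (α/2) with hx1 | hx1
  · -- x < α/2 < y : cross the breakpoint α/2
    have h1 : zipPsi α f x ≤ (1-α)/2 := by
      rw [zipPsi_eq1 hx1.le]
      have := (hb _ (zipPsi_arg1 hα1 hα2 hx.1 hx1.le)).2
      nlinarith
    have h2 : (1-α)/2 ≤ zipPsi α f y := by
      rcases le_or_gt y (1/2) with h | h
      · rw [zipPsi_eq2 hα1 hα2 hf0 hf1 hy1.le h]
        have := (hb _ (zipPsi_arg2 hα1 hα2 hy1.le h)).1
        nlinarith
      rcases le_or_gt y ((1+α)/2) with h' | h'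
      · rw [zipPsi_eq3 hα1 hα2 hf0 hf1 h.le h']
        have := (hb _ (zipPsi_arg3 hα1 hα2 h.le h')).1
        nlinarith
      · rw [zipPsi_eq4 hα1 hα2 hf0 hf1 h'.le]
        have := (hb _ (zipPsi_arg4 hα1 hα2 h'.le hy.2)).1
        nlinarith
    linarith
  rcases le_or_gt y (1/2) with hy2 | hy2
  · rw [zipPsi_eq2 hα1 hα2 hf0 hf1 hx1 (le_trans hxy hy2),
        zipPsi_eq2 hα1 hα2 hf0 hf1 hy1.le hy2]
    have ha := zipPsi_arg2 hα1 hα2 hx1 (le_trans hxy hy2)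
    have hb' := zipPsi_arg2 hα1 hα2 hy1.le hy2
    have h0 : (0:ℝ) < 1 - α := by linarith
    have : (2*x-α)/(1-α) ≤ (2*y-α)/(1-α) := by gcongr
    nlinarith [hm ha hb' this]
  rcases lt_or_ge x (1/2) with hx2 | hx2
  · have h1 : zipPsi α f x ≤ 1/2 := by
      rw [zipPsi_eq2 hα1 hα2 hf0 hf1 hx1 hx2.le]
      have := (hb _ (zipPsi_arg2 hα1 hα2 hx1 hx2.le)).2
      nlinarith
    have h2 : 1/2 ≤ zipPsi α f y := by
      rcases le_or_gt y ((1+α)/2) with h' | h'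
      · rw [zipPsi_eq3 hα1 hα2 hf0 hf1 hy2.le h']
        have := (hb _ (zipPsi_arg3 hα1 hα2 hy2.le h')).1
        nlinarith
      · rw [zipPsi_eq4 hα1 hα2 hf0 hf1 h'.le]
        have := (hb _ (zipPsi_arg4 hα1 hα2 h'.le hy.2)).1
        nlinarith
    linarith
  rcases le_or_gt y ((1+α)/2) with hy3 | hy3
  · rw [zipPsi_eq3 hα1 hα2 hf0 hf1 hx2 (le_trans hxy hy3),
        zipPsi_eq3 hα1 hα2 hf0 hf1 hy2.le hy3]
    have ha := zipPsi_arg3 hα1 hα2 hx2 (le_trans hxy hy3)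
    have hb' := zipPsi_arg3 hα1 hα2 hy2.le hy3
    have : (2*x-1)/α ≤ (2*y-1)/α := by gcongr
    nlinarith [hm ha hb' this]
  rcases lt_or_ge x ((1+α)/2) with hx3 | hx3
  · have h1 : zipPsi α f x ≤ 1 - α/2 := by
      rw [zipPsi_eq3 hα1 hα2 hf0 hf1 hx2 hx3.le]
      have := (hb _ (zipPsi_arg3 hα1 hα2 hx2 hx3.le)).2
      nlinarith
    have h2 : 1 - α/2 ≤ zipPsi α f y := by
      rw [zipPsi_eq4 hα1 hα2 hf0 hf1 hy3.le]
      have := (hb _ (zipPsi_arg4 hα1 hα2 hy3.le hy.2)).1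
      nlinarith
    linarith
  · rw [zipPsi_eq4 hα1 hα2 hf0 hf1 hx3, zipPsi_eq4 hα1 hα2 hf0 hf1 hy3.le]
    have ha := zipPsi_arg4 hα1 hα2 hx3 hx.2
    have hb' := zipPsi_arg4 hα1 hα2 hy3.le hy.2
    have h0 : (0:ℝ) < 1 - α := by linarith
    have : (2*x-(1+α))/(1-α) ≤ (2*y-(1+α))/(1-α) := by gcongr
    nlinarith [hm ha hb' this]

include hα1 hα2 in
lemma zipPsi_maps (hf : ZGood f) : ∀ x ∈ Icc (0:ℝ) 1, zipPsi α f x ∈ Icc (0:ℝ) 1 := by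
  intro x hx
  have h0 : zipPsi α f 0 = 0 := zipPsi_zero hα1 hα2 hf.2.1
  have h1 : zipPsi α f 1 = 1 := zipPsi_one hα1 hα2 hf.2.1 hf.2.2.1
  have hm := zipPsi_mono hα1 hα2 hf
  constructor
  · rw [← h0]; exact hm (by norm_num) hx hx.1
  · rw [← h1]; exact hm hx (by norm_num) hx.2

include hα1 hα2 in
lemma zipPsi_good (hf : ZGood f) : ZGood (zipPsi α f) :=
  ⟨zipPsi_mono hα1 hα2 hf, zipPsi_zero hα1 hα2 hf.2.1,
   zipPsi_one hα1 hα2 hf.2.1 hf.2.2.1, zipPsi_maps hα1 hα2 hf⟩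

include hα1 hα2 in
lemma zipPsi_form (hx : x ∈ Icc (0:ℝ) 1) (hf0 : f 0 = 0) (hf1 : f 1 = 1)
    (hg0 : g 0 = 0) (hg1 : g 1 = 1) :
    ∃ b c x', 0 < c ∧ c ≤ 1/2 ∧ x' ∈ Icc (0:ℝ) 1 ∧
      zipPsi α f x = b + c * f x' ∧ zipPsi α g x = b + c * g x' := by
  rcases le_or_gt x (α/2) with h1 | h1
  · exact ⟨0, (1-α)/2, 2*x/α, by linarith, by linarith,
      zipPsi_arg1 hα1 hα2 hx.1 h1,
      by rw [zipPsi_eq1 h1]; ring, by rw [zipPsi_eq1 h1]; ring⟩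
  rcases le_or_gt x (1/2) with h2 | h2
  · exact ⟨(1-α)/2, α/2, (2*x-α)/(1-α), by linarith, by linarith,
      zipPsi_arg2 hα1 hα2 h1.le h2,
      by rw [zipPsi_eq2 hα1 hα2 hf0 hf1 h1.le h2],
      by rw [zipPsi_eq2 hα1 hα2 hg0 hg1 h1.le h2]⟩
  rcases le_or_gt x ((1+α)/2) with h3 | h3
  · exact ⟨1/2, (1-α)/2, (2*x-1)/α, by linarith, by linarith,
      zipPsi_arg3 hα1 hα2 h2.le h3,
      by rw [zipPsi_eq3 hα1 hα2 hf0 hf1 h2.le h3],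
      by rw [zipPsi_eq3 hα1 hα2 hg0 hg1 h2.le h3]⟩
  · exact ⟨1-α/2, α/2, (2*x-(1+α))/(1-α), by linarith, by linarith,
      zipPsi_arg4 hα1 hα2 h3.le hx.2,
      by rw [zipPsi_eq4 hα1 hα2 hf0 hf1 h3.le],
      by rw [zipPsi_eq4 hα1 hα2 hg0 hg1 h3.le]⟩

include hα1 hα2 in
lemma zipPsi_contract (hf0 : f 0 = 0) (hf1 : f 1 = 1) (hg0 : g 0 = 0) (hg1 : g 1 = 1)
    {d : ℝ} (hd : ∀ t ∈ Icc (0:ℝ) 1, |f t - g t| ≤ d) :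
    ∀ x ∈ Icc (0:ℝ) 1, |zipPsi α f x - zipPsi α g x| ≤ d/2 := by
  intro x hx
  obtain ⟨b, c, x', hc0, hc, hx', ef, eg⟩ := zipPsi_form hα1 hα2 hx hf0 hf1 hg0 hg1
  rw [ef, eg]
  have : b + c * f x' - (b + c * g x') = c * (f x' - g x') := by ring
  rw [this, abs_mul, abs_of_pos hc0]
  have := hd x' hx'
  nlinarith [abs_nonneg (f x' - g x')]
end Psi2

section Cont
variable {α : ℝ} (hα1 : 0 < α) (hα2 : α < 1/2) {f : ℝ → ℝ}

include hα1 hα2 in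
lemma zipPsi_continuous (hf : Continuous f) (hf0 : f 0 = 0) (hf1 : f 1 = 1) :
    Continuous (zipPsi α f) := by
  have hne : (1:ℝ) - α ≠ 0 := by linarith
  have hne' : α ≠ 0 := ne_of_gt hα1
  have c1 : Continuous (fun x : ℝ => (1 - α) / 2 * f (2 * x / α)) := by
    fun_prop
  have c2 : Continuous (fun x : ℝ => (1 - α) / 2 + α / 2 * f ((2 * x - α) / (1 - α))) := by
    fun_prop
  have c3 : Continuous (fun x : ℝ => 1 / 2 + (1 - α) / 2 * f ((2 * x - 1) / α)) := by
    fun_prop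
  have c4 : Continuous (fun x : ℝ => 1 - α / 2 + α / 2 * f ((2 * x - (1 + α)) / (1 - α))) := by
    fun_prop
  have c34 : Continuous (fun x : ℝ => if x ≤ (1+α)/2 then 1 / 2 + (1 - α) / 2 * f ((2 * x - 1) / α)
      else 1 - α / 2 + α / 2 * f ((2 * x - (1 + α)) / (1 - α))) := by
    refine Continuous.if_le c3 c4 continuous_id continuous_const ?_
    intro x hx
    subst hx
    have e1 : (2*((1+α)/2)-1)/α = 1 := by field_simp; ring
    have e2 : (2*((1+α)/2)-(1+α))/(1-α) = 0 := by field_simp; ring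
    rw [e1, e2, hf0, hf1]; ring
  have c234 : Continuous (fun x : ℝ => if x ≤ 1/2 then (1 - α) / 2 + α / 2 * f ((2 * x - α) / (1 - α))
      else if x ≤ (1+α)/2 then 1 / 2 + (1 - α) / 2 * f ((2 * x - 1) / α)
      else 1 - α / 2 + α / 2 * f ((2 * x - (1 + α)) / (1 - α))) := by
    refine Continuous.if_le c2 c34 continuous_id continuous_const ?_
    intro x hx
    subst hx
    have e1 : (2*((1:ℝ)/2)-α)/(1-α) = 1 := by field_simp
    have e2 : (2*((1:ℝ)/2)-1)/α = 0 := by field_simp; ring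
    rw [if_pos (by linarith : (1:ℝ)/2 ≤ (1+α)/2), e1, e2, hf0, hf1]; ring
  unfold zipPsi
  refine Continuous.if_le c1 c234 continuous_id continuous_const ?_
  intro x hx
  subst hx
  have e1 : 2*(α/2)/α = 1 := by field_simp
  have e2 : (2*(α/2)-α)/(1-α) = 0 := by field_simp; ring
  rw [if_pos (by linarith : α/2 ≤ (1:ℝ)/2), e1, e2, hf0, hf1]; ring
end Cont

lemma zipHseq_good (s : ℕ → ℝ) (hs : ∀ n, s n ∈ Ioo (0:ℝ) (1/2)) (n : ℕ) :
    ZGood (zipHseq s n) := by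
  induction n generalizing s with
  | zero =>
    exact ⟨fun a _ b _ h => h, rfl, rfl, fun x hx => hx⟩
  | succ n ih =>
    exact zipPsi_good (hs 0).1 (hs 0).2 (ih _ (fun k => hs (k+1)))

lemma zipHseq_continuous (s : ℕ → ℝ) (hs : ∀ n, s n ∈ Ioo (0:ℝ) (1/2)) (n : ℕ) :
    Continuous (zipHseq s n) := by
  induction n generalizing s with
  | zero => exact continuous_id
  | succ n ih =>
    have hg := zipHseq_good (fun i => s (i+1)) (fun k => hs (k+1)) n
    exact zipPsi_continuous (hs 0).1 (hs 0).2 (ih _ (fun k => hs (k+1))) hg.2.1 hg.2.2.1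

lemma zipHseq_step (s : ℕ → ℝ) (hs : ∀ n, s n ∈ Ioo (0:ℝ) (1/2)) (n : ℕ) :
    ∀ x ∈ Icc (0:ℝ) 1, |zipHseq s n x - zipHseq s (n+1) x| ≤ (1/2)^n := by
  induction n generalizing s with
  | zero =>
    intro x hx
    have h1 := (zipHseq_good s hs 1).2.2.2 x hx
    simp only [zipHseq, id] at h1 ⊢
    rw [abs_le]
    constructor <;> [skip; skip] <;> (obtain ⟨h1a, h1b⟩ := h1; obtain ⟨hxa, hxb⟩ := hx; norm_num; linarith)
  | succ n ih =>
    intro x hx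
    have hs' : ∀ k, (fun i => s (i+1)) k ∈ Ioo (0:ℝ) (1/2) := fun k => hs (k+1)
    have g1 := zipHseq_good _ hs' n
    have g2 := zipHseq_good _ hs' (n+1)
    show |zipPsi (s 0) (zipHseq _ n) x - zipPsi (s 0) (zipHseq _ (n+1)) x| ≤ _
    have := zipPsi_contract (hs 0).1 (hs 0).2 g1.2.1 g1.2.2.1 g2.2.1 g2.2.2.1
      (ih _ hs') x hx
    calc |zipPsi (s 0) (zipHseq _ n) x - zipPsi (s 0) (zipHseq _ (n+1)) x|
        ≤ (1/2)^n / 2 := this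
      _ = (1/2)^(n+1) := by ring

lemma zipHseq_dist' (s : ℕ → ℝ) (hs : ∀ n, s n ∈ Ioo (0:ℝ) (1/2)) (n m : ℕ) (hnm : n ≤ m)
    (x : ℝ) (hx : x ∈ Icc (0:ℝ) 1) :
    |zipHseq s n x - zipHseq s m x| ≤ 2 * ((1/2)^n - (1/2)^m) := by
  induction m with
  | zero =>
    have : n = 0 := Nat.le_zero.mp hnm
    subst this; simp
  | succ m ih =>
    rcases Nat.lt_or_ge n (m+1) with h | h
    · have hle : n ≤ m := Nat.lt_succ_iff.mp h
      have h1 := ih hle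
      have h2 := zipHseq_step s hs m x hx
      have e : (1/2:ℝ)^(m+1) = (1/2)^m / 2 := by ring
      calc |zipHseq s n x - zipHseq s (m+1) x|
          ≤ |zipHseq s n x - zipHseq s m x| + |zipHseq s m x - zipHseq s (m+1) x| :=
            abs_sub_le _ _ _
        _ ≤ 2 * ((1/2)^n - (1/2)^(m+1)) := by rw [e]; linarith
    · have : n = m + 1 := le_antisymm hnm h
      subst this; simp
lemma zipHseq_dist (s : ℕ → ℝ) (hs : ∀ n, s n ∈ Ioo (0:ℝ) (1/2)) (n m : ℕ) (hnm : n ≤ m)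
    (x : ℝ) (hx : x ∈ Icc (0:ℝ) 1) :
    |zipHseq s n x - zipHseq s m x| ≤ 2 * (1/2)^n := by
  have := zipHseq_dist' s hs n m hnm x hx
  have : (0:ℝ) ≤ (1/2)^m := by positivity
  linarith [zipHseq_dist' s hs n m hnm x hx]

noncomputable def zipH (s : ℕ → ℝ) (x : ℝ) : ℝ := limUnder atTop (fun n => zipHseq s n x)

lemma zipH_tendsto (s : ℕ → ℝ) (hs : ∀ n, s n ∈ Ioo (0:ℝ) (1/2)) (x : ℝ)
    (hx : x ∈ Icc (0:ℝ) 1) :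
    Tendsto (fun n => zipHseq s n x) atTop (nhds (zipH s x)) := by
  have hc : CauchySeq (fun n => zipHseq s n x) := by
    apply cauchySeq_of_le_geometric (1/2 : ℝ) 1 (by norm_num)
    intro n
    rw [Real.dist_eq]
    simpa using zipHseq_step s hs n x hx
  exact hc.tendsto_limUnder

lemma zipH_dist (s : ℕ → ℝ) (hs : ∀ n, s n ∈ Ioo (0:ℝ) (1/2)) (n : ℕ) (x : ℝ)
    (hx : x ∈ Icc (0:ℝ) 1) :
    |zipHseq s n x - zipH s x| ≤ 2 * (1/2)^n := by
  have ht : Tendsto (fun m => |zipHseq s n x - zipHseq s m x|) atTop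
      (nhds (|zipHseq s n x - zipH s x|)) := by
    exact ((continuous_const.sub continuous_id).abs.continuousAt).tendsto.comp
      (zipH_tendsto s hs x hx)
  refine le_of_tendsto ht ?_
  filter_upwards [eventually_ge_atTop n] with m hm
  exact zipHseq_dist s hs n m hm x hx

lemma zipH_unif (s : ℕ → ℝ) (hs : ∀ n, s n ∈ Ioo (0:ℝ) (1/2)) :
    TendstoUniformlyOn (fun n => zipHseq s n) (zipH s) atTop (Icc 0 1) := by
  rw [Metric.tendstoUniformlyOn_iff]
  intro ε hε
  obtain ⟨N, hN⟩ := exists_pow_lt_of_lt_one (show (0:ℝ) < ε/2 by linarith) (by norm_num : (1/2:ℝ) < 1)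
  filter_upwards [eventually_ge_atTop N] with n hn x hx
  rw [Real.dist_eq, abs_sub_comm]
  have h1 := zipH_dist s hs n x hx
  have h2 : (1/2:ℝ)^n ≤ (1/2)^N := pow_le_pow_of_le_one (by norm_num) (by norm_num) hn
  calc |zipHseq s n x - zipH s x| ≤ 2 * (1/2)^n := h1
    _ ≤ 2 * (1/2)^N := by linarith
    _ < ε := by linarith

lemma zipH_mono (s : ℕ → ℝ) (hs : ∀ n, s n ∈ Ioo (0:ℝ) (1/2)) :
    MonotoneOn (zipH s) (Icc 0 1) := by
  intro x hx y hy hxy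
  exact le_of_tendsto_of_tendsto' (zipH_tendsto s hs x hx) (zipH_tendsto s hs y hy)
    (fun n => (zipHseq_good s hs n).1 hx hy hxy)

lemma zipH_zero (s : ℕ → ℝ) (hs : ∀ n, s n ∈ Ioo (0:ℝ) (1/2)) : zipH s 0 = 0 := by
  have h := zipH_tendsto s hs 0 (by norm_num)
  have : (fun n => zipHseq s n 0) = fun _ => (0:ℝ) := by
    funext n; exact (zipHseq_good s hs n).2.1
  rw [this] at h
  exact tendsto_nhds_unique h tendsto_const_nhds

lemma zipH_one (s : ℕ → ℝ) (hs : ∀ n, s n ∈ Ioo (0:ℝ) (1/2)) : zipH s 1 = 1 := by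
  have h := zipH_tendsto s hs 1 (by norm_num)
  have : (fun n => zipHseq s n 1) = fun _ => (1:ℝ) := by
    funext n; exact (zipHseq_good s hs n).2.2.1
  rw [this] at h
  exact tendsto_nhds_unique h tendsto_const_nhds

lemma zipH_maps (s : ℕ → ℝ) (hs : ∀ n, s n ∈ Ioo (0:ℝ) (1/2)) :
    ∀ x ∈ Icc (0:ℝ) 1, zipH s x ∈ Icc (0:ℝ) 1 := by
  intro x hx
  have h := zipH_tendsto s hs x hx
  constructor
  · exact ge_of_tendsto h (Eventually.of_forall fun n => ((zipHseq_good s hs n).2.2.2 x hx).1)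
  · exact le_of_tendsto h (Eventually.of_forall fun n => ((zipHseq_good s hs n).2.2.2 x hx).2)

lemma zipH_rec (s : ℕ → ℝ) (hs : ∀ n, s n ∈ Ioo (0:ℝ) (1/2)) (x : ℝ)
    (hx : x ∈ Icc (0:ℝ) 1) :
    zipH s x = zipPsi (s 0) (zipH (fun i => s (i+1))) x := by
  set s' : ℕ → ℝ := fun i => s (i+1) with hs'def
  have hs' : ∀ k, s' k ∈ Ioo (0:ℝ) (1/2) := fun k => hs (k+1)
  have hH0 : zipH s' 0 = 0 := zipH_zero s' hs'
  have hH1 : zipH s' 1 = 1 := zipH_one s' hs'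
  -- use form lemma with f := zipHseq s' n (any fixed good f works for ∀) — instead use
  -- the branch form for zipH s' and for each zipHseq s' n simultaneously; but form was
  -- stated for two functions. We redo: obtain form for (zipH s') paired with itself,
  -- then show each zipHseq matches.
  obtain ⟨h1, h2⟩ := hs 0
  rcases le_or_gt x ((s 0)/2) with hb | hb
  · have harg := zipPsi_arg1 h1 h2 hx.1 hb
    have key : ∀ n, zipHseq s (n+1) x = (1-(s 0))/2 * zipHseq s' n (2*x/(s 0)) := by
      intro n; exact zipPsi_eq1 hb
    have t1 : Tendsto (fun n => zipHseq s (n+1) x) atTop (nhds (zipH s x)) :=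
      (zipH_tendsto s hs x hx).comp (tendsto_add_atTop_nat 1)
    have t2 : Tendsto (fun n => (1-(s 0))/2 * zipHseq s' n (2*x/(s 0))) atTop
        (nhds ((1-(s 0))/2 * zipH s' (2*x/(s 0)))) :=
      (zipH_tendsto s' hs' _ harg).const_mul _
    rw [zipPsi_eq1 hb]
    exact tendsto_nhds_unique (by simpa only [key] using t1) t2
  rcases le_or_gt x (1/2) with hb2 | hb2
  · have harg := zipPsi_arg2 h1 h2 hb.le hb2
    have key : ∀ n, zipHseq s (n+1) x
        = (1-(s 0))/2 + (s 0)/2 * zipHseq s' n ((2*x-(s 0))/(1-(s 0))) := by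
      intro n
      have g := zipHseq_good s' hs' n
      exact zipPsi_eq2 h1 h2 g.2.1 g.2.2.1 hb.le hb2
    have t1 : Tendsto (fun n => zipHseq s (n+1) x) atTop (nhds (zipH s x)) :=
      (zipH_tendsto s hs x hx).comp (tendsto_add_atTop_nat 1)
    have t2 : Tendsto (fun n => (1-(s 0))/2 + (s 0)/2 * zipHseq s' n ((2*x-(s 0))/(1-(s 0)))) atTop
        (nhds ((1-(s 0))/2 + (s 0)/2 * zipH s' ((2*x-(s 0))/(1-(s 0))))) :=
      (((zipH_tendsto s' hs' _ harg).const_mul _).const_add _)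
    rw [zipPsi_eq2 h1 h2 hH0 hH1 hb.le hb2]
    exact tendsto_nhds_unique (by simpa only [key] using t1) t2
  rcases le_or_gt x ((1+(s 0))/2) with hb3 | hb3
  · have harg := zipPsi_arg3 h1 h2 hb2.le hb3
    have key : ∀ n, zipHseq s (n+1) x
        = 1/2 + (1-(s 0))/2 * zipHseq s' n ((2*x-1)/(s 0)) := by
      intro n
      have g := zipHseq_good s' hs' n
      exact zipPsi_eq3 h1 h2 g.2.1 g.2.2.1 hb2.le hb3
    have t1 : Tendsto (fun n => zipHseq s (n+1) x) atTop (nhds (zipH s x)) :=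
      (zipH_tendsto s hs x hx).comp (tendsto_add_atTop_nat 1)
    have t2 : Tendsto (fun n => 1/2 + (1-(s 0))/2 * zipHseq s' n ((2*x-1)/(s 0))) atTop
        (nhds (1/2 + (1-(s 0))/2 * zipH s' ((2*x-1)/(s 0)))) :=
      (((zipH_tendsto s' hs' _ harg).const_mul _).const_add _)
    rw [zipPsi_eq3 h1 h2 hH0 hH1 hb2.le hb3]
    exact tendsto_nhds_unique (by simpa only [key] using t1) t2
  · have harg := zipPsi_arg4 h1 h2 hb3.le hx.2
    have key : ∀ n, zipHseq s (n+1) x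
        = 1-(s 0)/2 + (s 0)/2 * zipHseq s' n ((2*x-(1+(s 0)))/(1-(s 0))) := by
      intro n
      have g := zipHseq_good s' hs' n
      exact zipPsi_eq4 h1 h2 g.2.1 g.2.2.1 hb3.le
    have t1 : Tendsto (fun n => zipHseq s (n+1) x) atTop (nhds (zipH s x)) :=
      (zipH_tendsto s hs x hx).comp (tendsto_add_atTop_nat 1)
    have t2 : Tendsto (fun n => 1-(s 0)/2 + (s 0)/2 * zipHseq s' n ((2*x-(1+(s 0)))/(1-(s 0)))) atTop
        (nhds (1-(s 0)/2 + (s 0)/2 * zipH s' ((2*x-(1+(s 0)))/(1-(s 0))))) :=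
      (((zipH_tendsto s' hs' _ harg).const_mul _).const_add _)
    rw [zipPsi_eq4 h1 h2 hH0 hH1 hb3.le]
    exact tendsto_nhds_unique (by simpa only [key] using t1) t2

lemma zipH_lt_one_aux : ∀ k : ℕ, ∀ s : ℕ → ℝ, (∀ n, s n ∈ Ioo (0:ℝ) (1/2)) →
    ∀ z ∈ Icc (0:ℝ) 1, (1/2:ℝ)^k ≤ 1 - z → zipH s z < 1 := by
  intro k
  induction k with
  | zero =>
    intro s hs z hz hk
    norm_num at hk
    have : z = 0 := le_antisymm (by linarith) hz.1
    rw [this, zipH_zero s hs]; norm_num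
  | succ k ih =>
    intro s hs z hz hk
    set α := s 0 with hα
    obtain ⟨h1, h2⟩ := hs 0
    set s' : ℕ → ℝ := fun i => s (i+1) with hs'def
    have hs' : ∀ n, s' n ∈ Ioo (0:ℝ) (1/2) := fun n => hs (n+1)
    have hH0 : zipH s' 0 = 0 := zipH_zero s' hs'
    have hH1 : zipH s' 1 = 1 := zipH_one s' hs'
    rcases le_or_gt z ((1+α)/2) with hb | hb
    · have hv : zipH s ((1+α)/2) = 1 - α/2 := by
        rw [zipH_rec s hs _ ⟨by linarith, by linarith⟩,
            zipPsi_eq4 h1 h2 hH0 hH1 le_rfl]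
        have e : (2*((1+α)/2)-(1+α))/(1-α) = 0 := by
          have : (1:ℝ) - α ≠ 0 := by linarith
          field_simp; ring
        rw [e, hH0]; ring
      have := zipH_mono s hs hz ⟨by linarith, by linarith⟩ hb
      rw [hv] at this; linarith
    · rw [zipH_rec s hs _ hz, zipPsi_eq4 h1 h2 hH0 hH1 hb.le]
      set z' := (2*z-(1+α))/(1-α) with hz'
      have harg : z' ∈ Icc (0:ℝ) 1 := zipPsi_arg4 h1 h2 hb.le hz.2
      have hne : (1:ℝ) - α ≠ 0 := by linarith
      have e : 1 - z' = 2*(1-z)/(1-α) := by rw [hz']; field_simp; ring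
      have hk' : (1/2:ℝ)^k ≤ 1 - z' := by
        have hp : (1/2:ℝ)^(k+1) = (1/2)^k/2 := by ring
        rw [e]
        rw [le_div_iff₀ (by linarith : (0:ℝ) < 1-α)]
        nlinarith [hz.2, hk]
      have := ih s' hs' z' harg hk'
      nlinarith

lemma zipH_pos_aux : ∀ k : ℕ, ∀ s : ℕ → ℝ, (∀ n, s n ∈ Ioo (0:ℝ) (1/2)) →
    ∀ z ∈ Icc (0:ℝ) 1, (1/2:ℝ)^k ≤ z → 0 < zipH s z := by
  intro k
  induction k with
  | zero =>
    intro s hs z hz hk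
    norm_num at hk
    have : z = 1 := le_antisymm hz.2 hk
    rw [this, zipH_one s hs]; norm_num
  | succ k ih =>
    intro s hs z hz hk
    set α := s 0 with hα
    obtain ⟨h1, h2⟩ := hs 0
    set s' : ℕ → ℝ := fun i => s (i+1) with hs'def
    have hs' : ∀ n, s' n ∈ Ioo (0:ℝ) (1/2) := fun n => hs (n+1)
    have hH1 : zipH s' 1 = 1 := zipH_one s' hs'
    rcases le_or_gt (α/2) z with hb | hb
    · have hv : zipH s (α/2) = (1-α)/2 := by
        rw [zipH_rec s hs _ ⟨by linarith, by linarith⟩, zipPsi_eq1 le_rfl]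
        have e : 2*(α/2)/α = 1 := by field_simp [show α ≠ 0 from h1.ne']
        rw [e, hH1]; ring
      have := zipH_mono s hs ⟨by linarith, by linarith⟩ hz hb
      rw [hv] at this; linarith
    · rw [zipH_rec s hs _ hz, zipPsi_eq1 hb.le]
      set z' := 2*z/α with hz'
      have harg : z' ∈ Icc (0:ℝ) 1 := zipPsi_arg1 h1 h2 hz.1 hb.le
      have hk' : (1/2:ℝ)^k ≤ z' := by
        have hp : (1/2:ℝ)^(k+1) = (1/2)^k/2 := by ring
        rw [hz', le_div_iff₀ h1]
        nlinarith [hz.1, hk]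
      have := ih s' hs' z' harg hk'
      nlinarith

lemma zipH_lt_one (s : ℕ → ℝ) (hs : ∀ n, s n ∈ Ioo (0:ℝ) (1/2))
    (z : ℝ) (hz : z ∈ Icc (0:ℝ) 1) (hz1 : z < 1) : zipH s z < 1 := by
  obtain ⟨k, hk⟩ := exists_pow_lt_of_lt_one (show (0:ℝ) < 1 - z by linarith)
    (by norm_num : (1/2:ℝ) < 1)
  exact zipH_lt_one_aux k s hs z hz hk.le

lemma zipH_pos (s : ℕ → ℝ) (hs : ∀ n, s n ∈ Ioo (0:ℝ) (1/2))
    (z : ℝ) (hz : z ∈ Icc (0:ℝ) 1) (hz0 : 0 < z) : 0 < zipH s z := by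
  obtain ⟨k, hk⟩ := exists_pow_lt_of_lt_one hz0 (by norm_num : (1/2:ℝ) < 1)
  exact zipH_pos_aux k s hs z hz hk.le

set_option maxHeartbeats 1000000 in
lemma zipH_strict_aux : ∀ k : ℕ, ∀ s : ℕ → ℝ, (∀ n, s n ∈ Ioo (0:ℝ) (1/2)) →
    ∀ x ∈ Icc (0:ℝ) 1, ∀ y ∈ Icc (0:ℝ) 1, x < y → (1/2:ℝ)^k ≤ y - x →
    zipH s x < zipH s y := by
  intro k
  induction k with
  | zero =>
    intro s hs x hx y hy hxy hk
    norm_num at hk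
    have hx0 : x = 0 := le_antisymm (by linarith [hy.2]) hx.1
    have hy1 : y = 1 := le_antisymm hy.2 (by linarith [hx.1])
    rw [hx0, hy1, zipH_zero s hs, zipH_one s hs]; norm_num
  | succ k ih =>
    intro s hs x hx y hy hxy hk
    set α := s 0 with hα
    obtain ⟨h1, h2⟩ := hs 0
    set s' : ℕ → ℝ := fun i => s (i+1) with hs'def
    have hs' : ∀ n, s' n ∈ Ioo (0:ℝ) (1/2) := fun n => hs (n+1)
    have hH0 : zipH s' 0 = 0 := zipH_zero s' hs'
    have hH1 : zipH s' 1 = 1 := zipH_one s' hs'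
    have hne : (1:ℝ) - α ≠ 0 := by linarith
    have hp : (1/2:ℝ)^(k+1) = (1/2)^k/2 := by ring
    have hmono := zipH_mono s hs
    rcases le_or_gt y (α/2) with c1 | c1
    · -- both in branch 1
      rw [zipH_rec s hs x hx, zipH_rec s hs y hy, zipPsi_eq1 (le_trans hxy.le c1),
          zipPsi_eq1 c1]
      have hax : 2*x/α ∈ Icc (0:ℝ) 1 := zipPsi_arg1 h1 h2 hx.1 (le_trans hxy.le c1)
      have hay : 2*y/α ∈ Icc (0:ℝ) 1 := zipPsi_arg1 h1 h2 hy.1 c1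
      have hlt : 2*x/α < 2*y/α := by gcongr <;> linarith
      have hd : (1/2:ℝ)^k ≤ 2*y/α - 2*x/α := by
        have e : 2*y/α - 2*x/α = 2*(y-x)/α := by field_simp
        rw [e, le_div_iff₀ h1]; nlinarith
      have := ih s' hs' _ hax _ hay hlt hd
      nlinarith
    rcases lt_or_ge x (α/2) with c2 | c2
    · -- x < α/2 ≤ y  : crossing α/2
      have hv : zipH s (α/2) = (1-α)/2 := by
        rw [zipH_rec s hs _ ⟨by linarith, by linarith⟩, zipPsi_eq1 le_rfl]
        have e : 2*(α/2)/α = 1 := by field_simp [show α ≠ 0 from h1.ne']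
        rw [e, hH1]; ring
      have hxval : zipH s x < (1-α)/2 := by
        rw [zipH_rec s hs x hx, zipPsi_eq1 c2.le]
        have hax : 2*x/α ∈ Icc (0:ℝ) 1 := zipPsi_arg1 h1 h2 hx.1 c2.le
        have hlt1 : 2*x/α < 1 := by rw [div_lt_one h1]; linarith
        have := zipH_lt_one s' hs' _ hax hlt1
        nlinarith
      have := hmono ⟨by linarith, by linarith⟩ hy c1.le
      rw [hv] at this; linarith
    rcases le_or_gt y (1/2) with c3 | c3
    · -- both in branch 2
      rw [zipH_rec s hs x hx, zipH_rec s hs y hy,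
          zipPsi_eq2 h1 h2 hH0 hH1 c2 (le_trans hxy.le c3),
          zipPsi_eq2 h1 h2 hH0 hH1 c1.le c3]
      have hax := zipPsi_arg2 h1 h2 c2 (le_trans hxy.le c3)
      have hay := zipPsi_arg2 h1 h2 c1.le c3
      have hlt : (2*x-α)/(1-α) < (2*y-α)/(1-α) := by gcongr <;> linarith
      have hd : (1/2:ℝ)^k ≤ (2*y-α)/(1-α) - (2*x-α)/(1-α) := by
        have e : (2*y-α)/(1-α) - (2*x-α)/(1-α) = 2*(y-x)/(1-α) := by field_simp; ring
        rw [e, le_div_iff₀ (by linarith : (0:ℝ) < 1-α)]; nlinarith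
      have := ih s' hs' _ hax _ hay hlt hd
      nlinarith
    rcases lt_or_ge x (1/2) with c4 | c4
    · -- crossing 1/2
      have hv : zipH s (1/2) = 1/2 := by
        rw [zipH_rec s hs _ ⟨by norm_num, by norm_num⟩,
            zipPsi_eq2 h1 h2 hH0 hH1 (by linarith) le_rfl]
        have e : (2*((1:ℝ)/2)-α)/(1-α) = 1 := by field_simp
        rw [e, hH1]; ring
      have hxval : zipH s x < 1/2 := by
        rw [zipH_rec s hs x hx, zipPsi_eq2 h1 h2 hH0 hH1 c2 c4.le]
        have hax := zipPsi_arg2 h1 h2 c2 c4.le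
        have hlt1 : (2*x-α)/(1-α) < 1 := by
          rw [div_lt_one (by linarith : (0:ℝ) < 1-α)]; linarith
        have := zipH_lt_one s' hs' _ hax hlt1
        nlinarith
      have := hmono ⟨by norm_num, by norm_num⟩ hy c3.le
      rw [hv] at this; linarith
    rcases le_or_gt y ((1+α)/2) with c5 | c5
    · -- both in branch 3
      rw [zipH_rec s hs x hx, zipH_rec s hs y hy,
          zipPsi_eq3 h1 h2 hH0 hH1 c4 (le_trans hxy.le c5),
          zipPsi_eq3 h1 h2 hH0 hH1 c3.le c5]
      have hax := zipPsi_arg3 h1 h2 c4 (le_trans hxy.le c5)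
      have hay := zipPsi_arg3 h1 h2 c3.le c5
      have hlt : (2*x-1)/α < (2*y-1)/α := by gcongr <;> linarith
      have hd : (1/2:ℝ)^k ≤ (2*y-1)/α - (2*x-1)/α := by
        have e : (2*y-1)/α - (2*x-1)/α = 2*(y-x)/α := by field_simp; ring
        rw [e, le_div_iff₀ h1]; nlinarith
      have := ih s' hs' _ hax _ hay hlt hd
      nlinarith
    rcases lt_or_ge x ((1+α)/2) with c6 | c6
    · -- crossing (1+α)/2
      have hv : zipH s ((1+α)/2) = 1 - α/2 := by
        rw [zipH_rec s hs _ ⟨by linarith, by linarith⟩,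
            zipPsi_eq4 h1 h2 hH0 hH1 le_rfl]
        have e : (2*((1+α)/2)-(1+α))/(1-α) = 0 := by field_simp; ring
        rw [e, hH0]; ring
      have hxval : zipH s x < 1 - α/2 := by
        rw [zipH_rec s hs x hx, zipPsi_eq3 h1 h2 hH0 hH1 c4 c6.le]
        have hax := zipPsi_arg3 h1 h2 c4 c6.le
        have hlt1 : (2*x-1)/α < 1 := by rw [div_lt_one h1]; linarith
        have := zipH_lt_one s' hs' _ hax hlt1
        nlinarith
      have := hmono ⟨by linarith, by linarith⟩ hy c5.le
      rw [hv] at this; linarith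
    · -- both in branch 4
      rw [zipH_rec s hs x hx, zipH_rec s hs y hy,
          zipPsi_eq4 h1 h2 hH0 hH1 c6, zipPsi_eq4 h1 h2 hH0 hH1 c5.le]
      have hax := zipPsi_arg4 h1 h2 c6 hx.2
      have hay := zipPsi_arg4 h1 h2 c5.le hy.2
      have hlt : (2*x-(1+α))/(1-α) < (2*y-(1+α))/(1-α) := by gcongr <;> linarith
      have hd : (1/2:ℝ)^k ≤ (2*y-(1+α))/(1-α) - (2*x-(1+α))/(1-α) := by
        have e : (2*y-(1+α))/(1-α) - (2*x-(1+α))/(1-α) = 2*(y-x)/(1-α) := by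
          field_simp; ring
        rw [e, le_div_iff₀ (by linarith : (0:ℝ) < 1-α)]; nlinarith
      have := ih s' hs' _ hax _ hay hlt hd
      nlinarith


/-- The maps h^n converge uniformly on [0,1] to a homeomorphism h of [0,1]. -/
theorem zipHseq_limit_homeo (s : ℕ → ℝ) (hs : ∀ n, s n ∈ Ioo (0:ℝ) (1 / 2)) :
    ∃ h : ℝ → ℝ,
      TendstoUniformlyOn (fun n => zipHseq s n) h atTop (Icc 0 1) ∧
      ContinuousOn h (Icc 0 1) ∧ BijOn h (Icc 0 1) (Icc 0 1) ∧
      StrictMonoOn h (Icc 0 1) := by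

  refine ⟨zipH s, zipH_unif s hs, ?_, ?_, ?_⟩
  · exact (zipH_unif s hs).continuousOn
      (Eventually.of_forall fun n => (zipHseq_continuous s hs n).continuousOn).frequently
  · have hstrict : StrictMonoOn (zipH s) (Icc 0 1) := by
      intro x hx y hy hxy
      obtain ⟨k, hk⟩ := exists_pow_lt_of_lt_one (show (0:ℝ) < y - x by linarith)
        (by norm_num : (1/2:ℝ) < 1)
      exact zipH_strict_aux k s hs x hx y hy hxy hk.le
    refine ⟨fun x hx => zipH_maps s hs x hx, hstrict.injOn, ?_⟩
    have hcont : ContinuousOn (zipH s) (Icc 0 1) :=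
      (zipH_unif s hs).continuousOn
        (Eventually.of_forall fun n => (zipHseq_continuous s hs n).continuousOn).frequently
    have := intermediate_value_Icc (by norm_num : (0:ℝ) ≤ 1) hcont
    rw [zipH_zero s hs, zipH_one s hs] at this
    exact this
  · intro x hx y hy hxy
    obtain ⟨k, hk⟩ := exists_pow_lt_of_lt_one (show (0:ℝ) < y - x by linarith)
      (by norm_num : (1/2:ℝ) < 1)
    exact zipH_strict_aux k s hs x hx y hy hxy hk.le
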